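/- Let W̃ be a group with an abelian normal subgroup X such that the quotient W̃/X is finite, and let σ be an automorphism of W̃ of finite order with σ(X) = X. Then: (a) for every w ∈ W̃ there exists an integer n ≥ 1 such that σⁿ is the identity automorphism of W̃ and g_n(w) = w · σ(w) ⋯ σ^{n−1}(w) lies in X; (b) the resulting element is well defined up to scaling: if n, m ≥ 1 both satisfy σⁿ = id, g_n(w) = λ ∈ X and σᵐ = id, g_m(w) = μ ∈ X, then λᵐ = μⁿ in X. (This is the well-definedness of the Newton point (1/n)·λ attached to an element of the Iwahori–Weyl group W̃ = X_*(T)_{Γ₀} ⋊ W₀ with its Frobenius action σ.) -/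

import Mathlib

/-- For an automorphism `σ` of a group `W` and `w ∈ W`, the twisted product
`g_n(w) = w · σ(w) · σ²(w) ⋯ σ^{n−1}(w)`. -/
def twistProd {W : Type*} [Group W] (σ : W → W) (w : W) (n : ℕ) : W :=
  ((List.range n).map fun i => σ^[i] w).prod

lemma mulAut_pow_apply {W : Type*} [Group W] (σ : MulAut W) (n : ℕ) (w : W) :
    (σ ^ n) w = (σ : W → W)^[n] w := by
  induction n with
  | zero => rfl
  | succ k ih =>
    rw [pow_succ', Function.iterate_succ_apply', ← ih]
    rfl

lemma twistProd_add {W : Type*} [Group W] (σ : MulAut W) (w : W) (a b : ℕ) :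
    twistProd σ w (a + b) = twistProd σ w a * (σ ^ a) (twistProd σ w b) := by
  unfold twistProd
  rw [List.range_add, List.map_append, List.prod_append]
  congr 1
  rw [List.map_map, map_list_prod (σ ^ a : MulAut W), List.map_map]
  refine congrArg List.prod (List.map_congr_left fun i _ => ?_)
  simp only [Function.comp_apply, mulAut_pow_apply, ← Function.iterate_add_apply]

lemma twistProd_mul {W : Type*} [Group W] (σ : MulAut W) (w : W) (k : ℕ)
    (hk : σ ^ k = 1) (m : ℕ) :
    twistProd σ w (k * m) = (twistProd σ w k) ^ m := by
  induction m with
  | zero => simp [twistProd]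
  | succ j ih =>
    have h1 : σ ^ (k * j) = 1 := by rw [pow_mul, hk, one_pow]
    rw [Nat.mul_succ, twistProd_add, ih, h1, pow_succ]
    rfl

/-- Let `W̃` be a group with an abelian normal subgroup `X` of finite index, and
`σ` a finite-order automorphism of `W̃` with `σ(X) = X`. Then (a) for every `w`
there is `n ≥ 1` with `σⁿ = id` and `g_n(w) ∈ X`; (b) if `n, m ≥ 1` both satisfy
`σⁿ = id`, `g_n(w) ∈ X` and `σᵐ = id`, `g_m(w) ∈ X`, then `g_n(w)^m = g_m(w)^n`. -/
theorem newton_point_well_defined {Wt : Type*} [Group Wt]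
    (X : Subgroup Wt) [X.Normal] [IsMulCommutative X] [Finite (Wt ⧸ X)]
    (σ : MulAut Wt) (hσ : IsOfFinOrder σ)
    (hσX : ∀ g : Wt, g ∈ X ↔ σ g ∈ X) :
    (∀ w : Wt, ∃ n : ℕ, 1 ≤ n ∧ σ ^ n = 1 ∧ twistProd σ w n ∈ X) ∧
    (∀ w : Wt, ∀ n m : ℕ, 1 ≤ n → 1 ≤ m → σ ^ n = 1 → σ ^ m = 1 →
      twistProd σ w n ∈ X → twistProd σ w m ∈ X →
      (twistProd σ w n) ^ m = (twistProd σ w m) ^ n) := by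
  constructor
  · intro w
    set k := orderOf σ with hk
    have hkpos : 0 < k := hσ.orderOf_pos
    set N := Nat.card (Wt ⧸ X) with hN
    have hNpos : 0 < N := Nat.card_pos
    refine ⟨k * N, Nat.one_le_iff_ne_zero.mpr (by positivity), ?_, ?_⟩
    · rw [pow_mul, pow_orderOf_eq_one, one_pow]
    · rw [twistProd_mul σ w k (pow_orderOf_eq_one σ) N]
      rw [← QuotientGroup.eq_one_iff]
      have : ((twistProd σ w k : Wt) : Wt ⧸ X) ^ N = 1 := pow_card_eq_one'
      rw [← this]
      norm_cast
  · intro w n m hn hm hσn hσm _ _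
    have h1 : twistProd σ w (n * m) = (twistProd σ w n) ^ m := twistProd_mul σ w n hσn m
    have h2 : twistProd σ w (m * n) = (twistProd σ w m) ^ n := twistProd_mul σ w m hσm n
    rw [← h1, ← h2, mul_comm]
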